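/- Let n ≥ 2, λ_1,…,λ_n pairwise distinct reals, α_1,…,α_n reals, J ⊆ ℝ an open interval with 0 ∉ J, and let u, y_1,…,y_n, f_1,…,f_n : J → ℝ be smooth functions of x satisfying y_j' = 2 y_j f_j − α_j and f_j' = u − f_j² − λ_j for j = 1,…,n, together with the constraints (y0): y_1 + ⋯ + y_n = −x/2 and 2y_1f_1 + ⋯ + 2y_nf_n − α_1 − ⋯ − α_n = −1/2. Define v := f_n, z_j := f_j − f_n and μ_j := λ_j − λ_n for j = 1,…,n−1, and β := (1/2)(1/2 − α_1 − ⋯ − α_n). Then for j = 1,…,n−1: y_j' = 2 y_j (z_j + v) − α_j and z_j' = −z_j(z_j + 2v) − μ_j; moreover v = (2/x)(y_1 z_1 + ⋯ + y_{n−1} z_{n−1} + β) on J, and u = v' + v² + λ_n. -/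

import Mathlib

open Set Function

/-- on the singular line `t = 0`, the system (yfx) with the constraints (y0)
reduces, under `v = fₙ`, `zⱼ = fⱼ − fₙ`, `μⱼ = λⱼ − λₙ`, `2β = 1/2 − α₁ − ⋯ − αₙ`, to the
symmetric system (yzx) with the constraint (v); moreover `u = v' + v² + λₙ`. -/
theorem statement17
    (n : ℕ) (hn : 2 ≤ n)
    (lam alp : Fin n → ℝ) (hlam : Function.Injective lam)
    (a b : ℝ) (J : Set ℝ) (hJ : J = Set.Ioo a b) (hJ0 : (0:ℝ) ∉ J)
    (u : ℝ → ℝ) (y f : Fin n → ℝ → ℝ)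
    (husmooth : ContDiffOn ℝ (⊤ : ℕ∞) u J)
    (hysmooth : ∀ j, ContDiffOn ℝ (⊤ : ℕ∞) (y j) J)
    (hfsmooth : ∀ j, ContDiffOn ℝ (⊤ : ℕ∞) (f j) J)
    -- system (yfx)
    (hyfx : ∀ j, ∀ x ∈ J,
      deriv (y j) x = 2 * y j x * f j x - alp j
      ∧ deriv (f j) x = u x - (f j x)^2 - lam j)
    -- constraints (y0)
    (hy0 : ∀ x ∈ J, ∑ j, y j x = -x/2)
    (hf0 : ∀ x ∈ J, (∑ j, 2 * y j x * f j x) - ∑ j, alp j = -(1:ℝ)/2)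
    -- the distinguished last index (representing j = n)
    (lst : Fin n) (hlst : (lst : ℕ) = n - 1)
    -- the new variables and parameters
    (v : ℝ → ℝ) (hv : v = f lst)
    (z : Fin (n-1) → ℝ → ℝ)
    (hz : ∀ j : Fin (n-1), ∀ x : ℝ, z j x = f (Fin.castLE (Nat.sub_le n 1) j) x - f lst x)
    (mu : Fin (n-1) → ℝ)
    (hmu : ∀ j : Fin (n-1), mu j = lam (Fin.castLE (Nat.sub_le n 1) j) - lam lst)
    (bet : ℝ) (hbet : bet = (1/2) * (1/2 - ∑ j, alp j)) :
    -- conclusion: system (yzx), the constraint (v), and recovery of the potential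
    (∀ j : Fin (n-1), ∀ x ∈ J,
      deriv (y (Fin.castLE (Nat.sub_le n 1) j)) x
        = 2 * y (Fin.castLE (Nat.sub_le n 1) j) x * (z j x + v x)
          - alp (Fin.castLE (Nat.sub_le n 1) j)
      ∧ deriv (z j) x = -(z j x) * (z j x + 2 * v x) - mu j)
    ∧ (∀ x ∈ J,
        v x = (2/x) * ((∑ j : Fin (n-1), y (Fin.castLE (Nat.sub_le n 1) j) x * z j x) + bet))
    ∧ (∀ x ∈ J, u x = deriv v x + (v x)^2 + lam lst) := by

  obtain ⟨m, rfl⟩ : ∃ m, n = m + 1 := ⟨n - 1, by omega⟩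
  have hlst' : lst = Fin.last m := Fin.ext hlst
  subst hlst' hv hJ hbet
  have hJopen : IsOpen (Set.Ioo a b) := isOpen_Ioo
  have hdiff : ∀ j, ∀ x ∈ Set.Ioo a b, DifferentiableAt ℝ (f j) x := fun j x hx =>
    ((hfsmooth j).differentiableOn (by simp)).differentiableAt (hJopen.mem_nhds hx)
  have key : ∀ G : Fin (m+1) → ℝ,
      ∑ j, G j = (∑ j : Fin (m+1-1), G (Fin.castLE (Nat.sub_le (m+1) 1) j)) + G (Fin.last m) := by
    intro G
    rw [Fin.sum_univ_castSucc]
    rfl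
  refine ⟨?_, ?_, ?_⟩
  · intro j x hx
    constructor
    · rw [(hyfx _ x hx).1, hz]
      ring
    · have hzd : deriv (z j) x
          = deriv (f (Fin.castLE (Nat.sub_le (m+1) 1) j)) x - deriv (f (Fin.last m)) x := by
        have hzfun : z j = fun t => f (Fin.castLE (Nat.sub_le (m+1) 1) j) t - f (Fin.last m) t :=
          funext (hz j)
        rw [hzfun, deriv_fun_sub (hdiff _ x hx) (hdiff _ x hx)]
      rw [hzd, (hyfx _ x hx).2, (hyfx _ x hx).2, hz, hmu]
      ring
  · intro x hx
    have hx0 : x ≠ 0 := fun h => hJ0 (h ▸ hx)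
    have hsum := hy0 x hx
    have hsum2 := hf0 x hx
    have e1 : ∀ j : Fin (m+1-1), y (Fin.castLE (Nat.sub_le (m+1) 1) j) x * z j x
        = y (Fin.castLE (Nat.sub_le (m+1) 1) j) x * f (Fin.castLE (Nat.sub_le (m+1) 1) j) x
          - f (Fin.last m) x * y (Fin.castLE (Nat.sub_le (m+1) 1) j) x := by
      intro j; rw [hz]; ring
    rw [Finset.sum_congr rfl (fun j _ => e1 j), Finset.sum_sub_distrib, ← Finset.mul_sum]
    have kY := key (fun j => y j x)
    have kYF := key (fun j => y j x * f j x)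
    have h2 : ∑ j : Fin (m+1), 2 * y j x * f j x = 2 * ∑ j : Fin (m+1), y j x * f j x := by
      rw [Finset.mul_sum]; exact Finset.sum_congr rfl (fun j _ => by ring)
    rw [h2] at hsum2
    rw [eq_comm, div_mul_eq_mul_div, div_eq_iff hx0]
    linear_combination (-2 : ℝ) * kYF + 2 * f (Fin.last m) x * kY
      - 2 * f (Fin.last m) x * hsum + hsum2
  · intro x hx
    have h := (hyfx (Fin.last m) x hx).2
    linarith
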